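/- Let G be a matrix Lie group, h > 0, τ : 𝔤 → G a smooth retraction with τ(0) = e, and suppose R_k, R_{k+1} ∈ G satisfy the reconstruction relation R_{k+1} = R_k τ(hΩ_k). Given variations δR_k = R_k η_k, δR_{k+1} = R_{k+1} η_{k+1}, the induced variation of Ω_k satisfies δΩ_k = dτ⁻¹_{hΩ_k}(-η_k + Ad_{τ(hΩ_k)} η_{k+1})/h, where dτ_ξ is the right trivialized tangent defined by ∂_ξτ(ξ)·η = (dτ_ξ η) τ(ξ) and Ad_g ξ = g ξ g⁻¹. -/

import Mathlib

open Matrix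

attribute [local instance] Matrix.linftyOpNormedAddCommGroup Matrix.linftyOpNormedRing
  Matrix.linftyOpNormedAlgebra

/-- Variation of the discrete algebra element under the reconstruction relation
`R_{k+1} = R_k τ(hΩ_k)` on a matrix Lie group.  Here `τ` is a retraction with
`τ(ξ)τ(-ξ) = e`, `dτ_ξ` is its right trivialized tangent (linear in the second
argument, with inverse `dτ⁻¹_ξ`), and the chain-rule hypothesis `hτchain`
expresses `∂_ξτ(ξ)·η = (dτ_ξ η)τ(ξ)` along the varied curve.  Given variations
`δR_k = R_k η_k` and `δR_{k+1} = R_{k+1} η_{k+1}`, the induced variation of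
`Ω_k` is `δΩ_k = dτ⁻¹_{hΩ_k}(-η_k + Ad_{τ(hΩ_k)} η_{k+1})/h`. -/
theorem discrete_variation_retraction {n : ℕ} (h : ℝ) (hh : 0 < h)
    (τ : Matrix (Fin n) (Fin n) ℝ → Matrix (Fin n) (Fin n) ℝ)
    (dτ dτinv : Matrix (Fin n) (Fin n) ℝ → Matrix (Fin n) (Fin n) ℝ → Matrix (Fin n) (Fin n) ℝ)
    (hτ0 : τ 0 = 1)
    (hτinv : ∀ ξ, τ ξ * τ (-ξ) = 1 ∧ τ (-ξ) * τ ξ = 1)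
    (hdτlin : ∀ ξ, IsLinearMap ℝ (dτ ξ))
    (hdτ : ∀ ξ η, dτ ξ (dτinv ξ η) = η ∧ dτinv ξ (dτ ξ η) = η)
    (Rk Rk1 Rkinv : ℝ → Matrix (Fin n) (Fin n) ℝ)
    (Ω : ℝ → Matrix (Fin n) (Fin n) ℝ) (δΩ ηk ηk1 : Matrix (Fin n) (Fin n) ℝ)
    (hRkinv : ∀ ε, Rk ε * Rkinv ε = 1 ∧ Rkinv ε * Rk ε = 1)
    (hrec : ∀ ε, Rk1 ε = Rk ε * τ (h • Ω ε))
    (hRk : HasDerivAt Rk (Rk 0 * ηk) 0)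
    (hRk1 : HasDerivAt Rk1 (Rk1 0 * ηk1) 0)
    (hΩ : HasDerivAt Ω δΩ 0)
    (hτchain : HasDerivAt (fun ε => τ (h • Ω ε)) (dτ (h • Ω 0) (h • δΩ) * τ (h • Ω 0)) 0) :
    δΩ = h⁻¹ • dτinv (h • Ω 0) (-ηk + τ (h • Ω 0) * ηk1 * τ (-(h • Ω 0))) := by
  set ξ := h • Ω 0 with hξ
  set T := τ ξ with hT
  -- units
  have hu : ∀ ε, IsUnit (Rk ε) := fun ε =>
    ⟨⟨Rk ε, Rkinv ε, (hRkinv ε).1, (hRkinv ε).2⟩, rfl⟩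
  have hinv_eq : ∀ ε, Rkinv ε = Ring.inverse (Rk ε) := fun ε => by
    rw [Ring.inverse_unit ⟨Rk ε, Rkinv ε, (hRkinv ε).1, (hRkinv ε).2⟩]; rfl
  -- derivative of Rkinv
  have u0 : (Matrix (Fin n) (Fin n) ℝ)ˣ := ⟨Rk 0, Rkinv 0, (hRkinv 0).1, (hRkinv 0).2⟩
  have hRkinv' : HasDerivAt Rkinv (-(ηk * Rkinv 0)) 0 := by
    have := (hasFDerivAt_ringInverse (𝕜 := ℝ)
      (⟨Rk 0, Rkinv 0, (hRkinv 0).1, (hRkinv 0).2⟩ : (Matrix (Fin n) (Fin n) ℝ)ˣ)).comp_hasDerivAt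
      0 hRk
    simp only [Function.comp_def] at this
    have heq : (fun ε => Ring.inverse (Rk ε)) = Rkinv := by
      funext ε; rw [hinv_eq ε]
    rw [heq] at this
    refine this.congr_deriv (Eq.symm ?_)
    simp only [ContinuousLinearMap.neg_apply, ContinuousLinearMap.mulLeftRight_apply]
    have h1 : Rkinv 0 * Rk 0 = 1 := (hRkinv 0).2
    simp only [Units.inv_mk]
    rw [← mul_assoc, h1, one_mul]
  -- derivative of ε ↦ Rkinv ε * Rk1 ε
  have hprod : HasDerivAt (fun ε => Rkinv ε * Rk1 ε)
      (-(ηk * Rkinv 0) * Rk1 0 + Rkinv 0 * (Rk1 0 * ηk1)) 0 := hRkinv'.mul hRk1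
  have hfun : (fun ε => τ (h • Ω ε)) = fun ε => Rkinv ε * Rk1 ε := by
    funext ε
    rw [hrec ε, ← mul_assoc, (hRkinv ε).2, one_mul]
  rw [hfun] at hτchain
  have huniq := hτchain.unique hprod
  -- simplify RHS
  have hT0 : Rk1 0 = Rk 0 * T := hrec 0
  have hRT : Rkinv 0 * Rk1 0 = T := by
    rw [hT0, ← mul_assoc, (hRkinv 0).2, one_mul]
  have h2 : Rkinv 0 * Rk 0 = 1 := (hRkinv 0).2
  have key : dτ ξ (h • δΩ) * T = -(ηk * T) + T * ηk1 := by
    rw [huniq, hT0, neg_mul, mul_assoc ηk (Rkinv 0), ← mul_assoc (Rkinv 0) (Rk 0) T, h2, one_mul,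
      mul_assoc (Rk 0) T ηk1, ← mul_assoc (Rkinv 0) (Rk 0), h2, one_mul]
  -- multiply by τ(-ξ) on right
  have key2 : dτ ξ (h • δΩ) = -ηk + T * ηk1 * τ (-ξ) := by
    have := congrArg (· * τ (-ξ)) key
    rw [mul_assoc, (hτinv ξ).1, mul_one] at this
    rw [this, add_mul, neg_mul, mul_assoc ηk, (hτinv ξ).1, mul_one]
  have key3 : h • δΩ = dτinv ξ (-ηk + T * ηk1 * τ (-ξ)) := by
    rw [← key2, (hdτ ξ (h • δΩ)).2]
  rw [← key3, smul_smul, inv_mul_cancel₀ hh.ne', one_smul]
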